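/- arXiv:1703.01779 — 9 statements merged into one kernel-verified Lean document; each statement's English description precedes it below -/
import Mathlib

section
/- If x, y > 0 and (1/C) ≤ sinh x / sinh y ≤ C for some C > 1, then (1/C) ≤ x/y ≤ C. -/
open Real

lemma sinh_convex : ConvexOn ℝ (Set.Ici (0:ℝ)) Real.sinh := by
  apply convexOn_of_deriv2_nonneg (convex_Ici 0)
    Real.continuous_sinh.continuousOn
    Real.differentiable_sinh.differentiableOn
  · simp only [Real.deriv_sinh]
    exact Real.differentiable_cosh.differentiableOn
  · intro x hx
    rw [interior_Ici] at hx
    have : deriv^[2] Real.sinh = Real.sinh := by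
      ext t
      simp [Function.iterate_succ, Real.deriv_sinh, Real.deriv_cosh]
    rw [this]
    exact (Real.sinh_pos_iff.2 hx).le

lemma mul_sinh_le (a t : ℝ) (ha : 1 ≤ a) (ht : 0 < t) :
    a * Real.sinh t ≤ Real.sinh (a * t) := by
  have ha0 : 0 < a := lt_of_lt_of_le one_pos ha
  have key := sinh_convex.2 (Set.mem_Ici.2 (by positivity : (0:ℝ) ≤ a * t))
    (Set.mem_Ici.2 le_rfl) (by positivity : (0:ℝ) ≤ 1/a)
    (by rw [sub_nonneg]; exact div_le_one_of_le₀ ha ha0.le |>.trans_eq rfl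
      : (0:ℝ) ≤ 1 - 1/a) (by ring)
  simp only [smul_eq_mul, mul_zero, add_zero, Real.sinh_zero] at key
  have : (1/a) * (a * t) = t := by field_simp
  rw [this] at key
  calc a * Real.sinh t ≤ a * ((1/a) * Real.sinh (a*t)) := by
        apply mul_le_mul_of_nonneg_left key ha0.le
    _ = Real.sinh (a * t) := by field_simp

theorem stmt_1 (C x y : ℝ) (hC : 1 < C) (hx : 0 < x) (hy : 0 < y)
    (h1 : 1 / C ≤ Real.sinh x / Real.sinh y)
    (h2 : Real.sinh x / Real.sinh y ≤ C) :
    1 / C ≤ x / y ∧ x / y ≤ C := by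
  have hC0 : 0 < C := lt_trans one_pos hC
  have hsx : 0 < Real.sinh x := Real.sinh_pos_iff.2 hx
  have hsy : 0 < Real.sinh y := Real.sinh_pos_iff.2 hy
  have hxy : Real.sinh x ≤ C * Real.sinh y := by
    rwa [div_le_iff₀ hsy] at h2
  have hyx : Real.sinh y ≤ C * Real.sinh x := by
    rw [div_le_div_iff₀ hC0 hsy, one_mul] at h1
    linarith
  constructor
  · rw [div_le_div_iff₀ hC0 hy, one_mul]
    by_contra h
    push_neg at h
    have : Real.sinh y > Real.sinh (C * x) := Real.sinh_lt_sinh.2 (by linarith)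
    have := mul_sinh_le C x hC.le hx
    linarith
  · rw [div_le_iff₀ hy]
    by_contra h
    push_neg at h
    have : Real.sinh x > Real.sinh (C * y) := Real.sinh_lt_sinh.2 (by linarith)
    have := mul_sinh_le C y hC.le hy
    linarith
end

section
/- Let f(c, ρ₁, ρ₂) = cosh ρ₁ · cosh ρ₂ · cosh c − sinh ρ₁ · sinh ρ₂. If 0 < c ≤ c', then for all real ρ₁, ρ₂: f(c, ρ₁, ρ₂)/f(c', ρ₁, ρ₂) ≥ (cosh c − 1)/(cosh c' − 1). -/
noncomputable def f (c ρ₁ ρ₂ : ℝ) : ℝ :=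
  Real.cosh ρ₁ * Real.cosh ρ₂ * Real.cosh c - Real.sinh ρ₁ * Real.sinh ρ₂

theorem stmt_5 (c c' : ℝ) (hc : 0 < c) (hcc' : c ≤ c') (ρ₁ ρ₂ : ℝ) :
    f c ρ₁ ρ₂ / f c' ρ₁ ρ₂ ≥ (Real.cosh c - 1) / (Real.cosh c' - 1) := by
  have hA : 1 ≤ Real.cosh ρ₁ * Real.cosh ρ₂ := by
    nlinarith [Real.one_le_cosh ρ₁, Real.one_le_cosh ρ₂]
  have hAB : Real.cosh ρ₁ * Real.cosh ρ₂ - Real.sinh ρ₁ * Real.sinh ρ₂ =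
      Real.cosh (ρ₁ - ρ₂) := (Real.cosh_sub _ _).symm
  have h1 : 1 ≤ Real.cosh (ρ₁ - ρ₂) := Real.one_le_cosh _
  have hu : 1 < Real.cosh c := by
    rw [← Real.cosh_zero]
    exact Real.cosh_lt_cosh.mpr (by simpa [abs_of_pos hc] using hc)
  have hu' : Real.cosh c ≤ Real.cosh c' := by
    apply Real.cosh_le_cosh.mpr
    rw [abs_of_pos hc, abs_of_pos (hc.trans_le hcc')]
    exact hcc'
  have hfc : 0 < f c ρ₁ ρ₂ := by unfold f; nlinarith
  have hfc' : 0 < f c' ρ₁ ρ₂ := by unfold f; nlinarith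
  rw [ge_iff_le, div_le_div_iff₀ (by linarith) hfc']
  unfold f
  nlinarith [mul_nonneg (by nlinarith : (0:ℝ) ≤ Real.cosh ρ₁ * Real.cosh ρ₂ - Real.sinh ρ₁ * Real.sinh ρ₂) (sub_nonneg.mpr hu')]
end

section
/- Let f(c, ρ₁, ρ₂) = cosh ρ₁ · cosh ρ₂ · cosh c − sinh ρ₁ · sinh ρ₂. If 0 < c ≤ c', then for all real ρ₁, ρ₂: (f(c, ρ₁, ρ₂)² − 1)/(f(c', ρ₁, ρ₂)² − 1) ≥ ((cosh c − 1)/(cosh c' − 1))². -/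
theorem stmt_6 (c c' : ℝ) (hc : 0 < c) (hcc' : c ≤ c') (ρ₁ ρ₂ : ℝ) :
    (f c ρ₁ ρ₂ ^ 2 - 1) / (f c' ρ₁ ρ₂ ^ 2 - 1)
      ≥ ((Real.cosh c - 1) / (Real.cosh c' - 1)) ^ 2 := by
  set A := Real.cosh ρ₁ * Real.cosh ρ₂ with hAdef
  set B := Real.sinh ρ₁ * Real.sinh ρ₂ with hBdef
  have hAB : 1 ≤ A - B := by
    have := Real.one_le_cosh (ρ₁ - ρ₂)
    rw [Real.cosh_sub] at this; linarith
  have hA : 1 ≤ A :=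
    one_le_mul_of_one_le_of_one_le (Real.one_le_cosh ρ₁) (Real.one_le_cosh ρ₂)
  have hu : 1 < Real.cosh c := Real.one_lt_cosh.mpr (ne_of_gt hc)
  have huu' : Real.cosh c ≤ Real.cosh c' := by
    rw [Real.cosh_le_cosh, abs_of_pos hc, abs_of_pos (lt_of_lt_of_le hc hcc')]
    exact hcc'
  set u := Real.cosh c
  set u' := Real.cosh c'
  have hfc : f c ρ₁ ρ₂ = A * u - B := rfl
  have hfc' : f c' ρ₁ ρ₂ = A * u' - B := rfl
  have hf1 : 0 < A * u' - B - 1 := by nlinarith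
  have hf2 : 0 < A * u' - B + 1 := by nlinarith
  have hX : 0 ≤ (A * u - B - 1) * (u' - 1) - (u - 1) * (A * u' - B - 1) := by
    nlinarith
  have hY : 0 ≤ (A * u - B + 1) * (u' - 1) - (u - 1) * (A * u' - B + 1) := by
    nlinarith
  rw [hfc, hfc', ge_iff_le, div_pow, div_le_div_iff₀ (by nlinarith) (by nlinarith)]
  nlinarith [mul_nonneg hX hY, mul_nonneg (mul_nonneg hX (le_of_lt (sub_pos.mpr hu))) hf2.le,
    mul_nonneg (mul_nonneg hY (le_of_lt (sub_pos.mpr hu))) hf1.le]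
end

section
/- Let f(c, ρ₁, ρ₂) = cosh ρ₁ · cosh ρ₂ · cosh c − sinh ρ₁ · sinh ρ₂. If 0 < c ≤ c', then for all real ρ₁, ρ₂: (f(c, ρ₁, ρ₂) − 1)/(f(c', ρ₁, ρ₂) − 1) ≥ (cosh c − 1)/(cosh c' − 1). -/
theorem stmt_7 (c c' : ℝ) (hc : 0 < c) (hcc' : c ≤ c') (ρ₁ ρ₂ : ℝ) :
    (f c ρ₁ ρ₂ - 1) / (f c' ρ₁ ρ₂ - 1)
      ≥ (Real.cosh c - 1) / (Real.cosh c' - 1) := by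
  have hc' : 0 < c' := lt_of_lt_of_le hc hcc'
  have h1 : 1 < Real.cosh c' := Real.one_lt_cosh.2 (ne_of_gt hc')
  have h2 : Real.cosh c ≤ Real.cosh c' := by
    rcases eq_or_lt_of_le hcc' with h | h
    · rw [h]
    · exact le_of_lt ((Real.cosh_lt_cosh).2 (by rwa [abs_of_pos hc, abs_of_pos hc']))
  have hc1 : 1 < Real.cosh c := Real.one_lt_cosh.2 (ne_of_gt hc)
  have hA : 1 ≤ Real.cosh ρ₁ * Real.cosh ρ₂ :=
    one_le_mul_of_one_le_of_one_le (Real.one_le_cosh ρ₁) (Real.one_le_cosh ρ₂)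
  have hAB : 1 ≤ Real.cosh ρ₁ * Real.cosh ρ₂ - Real.sinh ρ₁ * Real.sinh ρ₂ := by
    have := Real.one_le_cosh (ρ₁ - ρ₂)
    rwa [Real.cosh_sub] at this
  have hf' : 0 < f c' ρ₁ ρ₂ - 1 := by
    unfold f; nlinarith
  rw [ge_iff_le, div_le_div_iff₀ (by linarith) hf']
  unfold f
  nlinarith [mul_nonneg (sub_nonneg.2 hAB) (sub_nonneg.2 h2)]
end

section
/- Let f(c, ρ₁, ρ₂) = cosh ρ₁ · cosh ρ₂ · cosh c − sinh ρ₁ · sinh ρ₂ and let d(c, ρ₁, ρ₂) = arccosh(f(c, ρ₁, ρ₂)). Suppose c, c' > 0 and (1/C) ≤ (cosh c − 1)/(cosh c' − 1) ≤ C for some C > 1. Then for all real ρ₁, ρ₂: |d(c', ρ₁, ρ₂) − d(c, ρ₁, ρ₂)| ≤ arccosh C. -/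
noncomputable def arcosh (x : ℝ) : ℝ := Real.log (x + Real.sqrt (x ^ 2 - 1))

noncomputable def d (c ρ₁ ρ₂ : ℝ) : ℝ := arcosh (f c ρ₁ ρ₂)

lemma sqrt_sq' {x : ℝ} (hx : 1 ≤ x) :
    Real.sqrt (x ^ 2 - 1) ^ 2 = x ^ 2 - 1 :=
  Real.sq_sqrt (by nlinarith)

lemma cosh_arcosh {x : ℝ} (hx : 1 ≤ x) : Real.cosh (arcosh x) = x := by
  set s := Real.sqrt (x ^ 2 - 1) with hs
  have hs2 : s ^ 2 = x ^ 2 - 1 := sqrt_sq' hx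
  have hsnn : 0 ≤ s := Real.sqrt_nonneg _
  have hpos : 0 < x + s := by linarith
  have hexp : Real.exp (arcosh x) = x + s := Real.exp_log hpos
  have hinv : Real.exp (-(arcosh x)) = (x + s)⁻¹ := by
    rw [Real.exp_neg, hexp]
  rw [Real.cosh_eq, hexp, hinv]
  have h1 : (x + s) * (x - s) = 1 := by nlinarith
  have hinv' : (x + s)⁻¹ = x - s := by
    field_simp
    nlinarith
  rw [hinv']; ring

lemma sinh_arcosh {x : ℝ} (hx : 1 ≤ x) : Real.sinh (arcosh x) = Real.sqrt (x ^ 2 - 1) := by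
  set s := Real.sqrt (x ^ 2 - 1) with hs
  have hs2 : s ^ 2 = x ^ 2 - 1 := sqrt_sq' hx
  have hsnn : 0 ≤ s := Real.sqrt_nonneg _
  have hpos : 0 < x + s := by linarith
  have hexp : Real.exp (arcosh x) = x + s := Real.exp_log hpos
  have hinv : Real.exp (-(arcosh x)) = (x + s)⁻¹ := by
    rw [Real.exp_neg, hexp]
  rw [Real.sinh_eq, hexp, hinv]
  have hinv' : (x + s)⁻¹ = x - s := by
    field_simp
    nlinarith
  rw [hinv']; ring

lemma arcosh_cosh {t : ℝ} (ht : 0 ≤ t) : arcosh (Real.cosh t) = t := by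
  have hsinh : 0 ≤ Real.sinh t := Real.sinh_nonneg_iff.2 ht
  have h : Real.cosh t ^ 2 - 1 = Real.sinh t ^ 2 := by
    have := Real.cosh_sq_sub_sinh_sq t; nlinarith [this]
  unfold arcosh
  rw [h, Real.sqrt_sq hsinh, Real.cosh_add_sinh, Real.log_exp]

lemma arcosh_mono {x y : ℝ} (hx : 1 ≤ x) (hxy : x ≤ y) : arcosh x ≤ arcosh y := by
  have hsx : 0 ≤ Real.sqrt (x ^ 2 - 1) := Real.sqrt_nonneg _
  apply Real.log_le_log (by linarith)
  have : Real.sqrt (x ^ 2 - 1) ≤ Real.sqrt (y ^ 2 - 1) :=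
    Real.sqrt_le_sqrt (by nlinarith)
  linarith

lemma arcosh_nonneg {x : ℝ} (hx : 1 ≤ x) : 0 ≤ arcosh x :=
  Real.log_nonneg (by have := Real.sqrt_nonneg (x ^ 2 - 1); linarith)

lemma key {x y C : ℝ} (hx : 1 ≤ x) (hy : 1 ≤ y) (hC : 1 ≤ C)
    (h : y ≤ 1 + C * (x - 1)) : arcosh y ≤ arcosh x + arcosh C := by
  have hsx : 0 ≤ Real.sinh (arcosh x) := by
    rw [sinh_arcosh hx]; exact Real.sqrt_nonneg _
  have hsC : 0 ≤ Real.sinh (arcosh C) := by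
    rw [sinh_arcosh hC]; exact Real.sqrt_nonneg _
  have hle : y ≤ Real.cosh (arcosh x + arcosh C) := by
    rw [Real.cosh_add, cosh_arcosh hx, cosh_arcosh hC]
    nlinarith
  calc arcosh y ≤ arcosh (Real.cosh (arcosh x + arcosh C)) := arcosh_mono hy hle
    _ = arcosh x + arcosh C :=
      arcosh_cosh (by have := arcosh_nonneg hx; have := arcosh_nonneg hC; linarith)

theorem stmt_8 (c c' C : ℝ) (hc : 0 < c) (hc' : 0 < c') (hC : 1 < C)
    (h1 : 1 / C ≤ (Real.cosh c - 1) / (Real.cosh c' - 1))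
    (h2 : (Real.cosh c - 1) / (Real.cosh c' - 1) ≤ C) (ρ₁ ρ₂ : ℝ) :
    |d c' ρ₁ ρ₂ - d c ρ₁ ρ₂| ≤ arcosh C := by
  have hcc : 1 < Real.cosh c := Real.one_lt_cosh.2 (ne_of_gt hc)
  have hcc' : 1 < Real.cosh c' := Real.one_lt_cosh.2 (ne_of_gt hc')
  have hCpos : (0:ℝ) < C := by linarith
  -- cosh c' - 1 ≤ C * (cosh c - 1)
  have hA : Real.cosh c' - 1 ≤ C * (Real.cosh c - 1) := by
    rw [div_le_div_iff₀ (by positivity) (by linarith)] at h1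
    nlinarith
  have hB : Real.cosh c - 1 ≤ C * (Real.cosh c' - 1) := by
    rw [div_le_iff₀ (by linarith)] at h2
    linarith
  have h1ρ : 1 ≤ Real.cosh ρ₁ := Real.one_le_cosh ρ₁
  have h2ρ : 1 ≤ Real.cosh ρ₂ := Real.one_le_cosh ρ₂
  have hsub : 1 ≤ Real.cosh ρ₁ * Real.cosh ρ₂ - Real.sinh ρ₁ * Real.sinh ρ₂ := by
    have := Real.one_le_cosh (ρ₁ - ρ₂)
    rw [Real.cosh_sub] at this; linarith
  have hP : 0 ≤ Real.cosh ρ₁ * Real.cosh ρ₂ := by positivity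
  have t0 : 0 ≤ Real.cosh ρ₁ * Real.cosh ρ₂ * (Real.cosh c - 1) :=
    mul_nonneg hP (by linarith)
  have t0' : 0 ≤ Real.cosh ρ₁ * Real.cosh ρ₂ * (Real.cosh c' - 1) :=
    mul_nonneg hP (by linarith)
  have t1 : 0 ≤ Real.cosh ρ₁ * Real.cosh ρ₂ * (C * (Real.cosh c - 1) - (Real.cosh c' - 1)) :=
    mul_nonneg hP (by linarith)
  have t1' : 0 ≤ Real.cosh ρ₁ * Real.cosh ρ₂ * (C * (Real.cosh c' - 1) - (Real.cosh c - 1)) :=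
    mul_nonneg hP (by linarith)
  have t2 : 0 ≤ (C - 1) * (Real.cosh ρ₁ * Real.cosh ρ₂ - Real.sinh ρ₁ * Real.sinh ρ₂ - 1) :=
    mul_nonneg (by linarith) (by linarith)
  have hfx : 1 ≤ f c ρ₁ ρ₂ := by unfold f; nlinarith [t0]
  have hfy : 1 ≤ f c' ρ₁ ρ₂ := by unfold f; nlinarith [t0']
  have hyx : f c' ρ₁ ρ₂ ≤ 1 + C * (f c ρ₁ ρ₂ - 1) := by unfold f; nlinarith [t1, t2]
  have hxy : f c ρ₁ ρ₂ ≤ 1 + C * (f c' ρ₁ ρ₂ - 1) := by unfold f; nlinarith [t1', t2]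
  rw [abs_sub_le_iff]
  constructor
  · have := key hfx hfy (le_of_lt hC) hyx
    unfold d; linarith
  · have := key hfy hfx (le_of_lt hC) hxy
    unfold d; linarith
end

section
/- Let f(c, ρ₁, ρ₂) = cosh ρ₁ · cosh ρ₂ · cosh c − sinh ρ₁ · sinh ρ₂ and let d(c, ρ₁, ρ₂) = arccosh(f(c, ρ₁, ρ₂)). Suppose c, c' > 0 and (1/C) ≤ (cosh c − 1)/(cosh c' − 1) ≤ C for some C > 1. Then for all real ρ₁, ρ₂: (1/C) ≤ d(c, ρ₁, ρ₂)/d(c', ρ₁, ρ₂) ≤ C. -/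
lemma arcosh_pos {x : ℝ} (hx : 1 < x) : 0 < arcosh x := by
  have hs : 0 ≤ x ^ 2 - 1 := by nlinarith
  apply Real.log_pos
  have := Real.sqrt_nonneg (x ^ 2 - 1)
  linarith

lemma one_lt_f {c : ℝ} (hc : 0 < c) (ρ₁ ρ₂ : ℝ) : 1 < f c ρ₁ ρ₂ := by
  have key : f c ρ₁ ρ₂ - 1 =
      Real.cosh ρ₁ * Real.cosh ρ₂ * (Real.cosh c - 1) + (Real.cosh (ρ₁ - ρ₂) - 1) := by
    rw [f, Real.cosh_sub]; ring
  have h1 : 1 < Real.cosh c := Real.one_lt_cosh.2 hc.ne'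
  have h2 := Real.one_le_cosh ρ₁
  have h3 := Real.one_le_cosh ρ₂
  have h4 := Real.one_le_cosh (ρ₁ - ρ₂)
  have hP : 0 < Real.cosh ρ₁ * Real.cosh ρ₂ * (Real.cosh c - 1) := by
    apply mul_pos (by nlinarith) (by linarith)
  linarith

/-- `K * (cosh x - 1) ≤ cosh (K * x) - 1` for `K ≥ 1`, `x ≥ 0`. -/
lemma cosh_superlinear {K x : ℝ} (hK : 1 ≤ K) (hx : 0 ≤ x) :
    K * (Real.cosh x - 1) ≤ Real.cosh (K * x) - 1 := by
  have hmono : MonotoneOn (fun y => Real.cosh (K * y) - K * Real.cosh y) (Set.Ici 0) := by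
    have hd : ∀ y : ℝ, HasDerivAt (fun y => Real.cosh (K * y) - K * Real.cosh y)
        (Real.sinh (K * y) * K - K * Real.sinh y) y := by
      intro y
      have h1 : HasDerivAt (fun y : ℝ => K * y) K y := by
        simpa using (hasDerivAt_id y).const_mul K
      exact ((Real.hasDerivAt_cosh (K * y)).comp y h1).sub
        ((Real.hasDerivAt_cosh y).const_mul K)
    apply monotoneOn_of_deriv_nonneg (convex_Ici 0)
    · exact Continuous.continuousOn (by continuity)
    · exact fun y _ => ((hd y).differentiableAt).differentiableWithinAt
    · intro y hy
      rw [(hd y).deriv]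
      have hy0 : 0 ≤ y := le_of_lt (by simpa using hy)
      have hle : y ≤ K * y := le_mul_of_one_le_left hy0 hK
      have := Real.sinh_le_sinh.2 hle
      nlinarith
  have := hmono (Set.self_mem_Ici) (Set.mem_Ici.2 hx) hx
  simp only [mul_zero, Real.cosh_zero, mul_one] at this
  linarith

/-- if cosh a - 1 ≤ C (cosh b - 1) with a,b ≥ 0, C ≥ 1 then a ≤ C b -/
lemma le_of_cosh_le {a b C : ℝ} (ha : 0 ≤ a) (hb : 0 ≤ b) (hC : 1 ≤ C)
    (h : Real.cosh a - 1 ≤ C * (Real.cosh b - 1)) : a ≤ C * b := by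
  have h2 : Real.cosh a ≤ Real.cosh (C * b) := by
    have := cosh_superlinear hC hb
    linarith
  have := Real.cosh_le_cosh.1 h2
  rwa [abs_of_nonneg ha, abs_of_nonneg (by positivity)] at this

theorem stmt_9 (c c' C : ℝ) (hc : 0 < c) (hc' : 0 < c') (hC : 1 < C)
    (h1 : 1 / C ≤ (Real.cosh c - 1) / (Real.cosh c' - 1))
    (h2 : (Real.cosh c - 1) / (Real.cosh c' - 1) ≤ C) (ρ₁ ρ₂ : ℝ) :
    1 / C ≤ d c ρ₁ ρ₂ / d c' ρ₁ ρ₂ ∧ d c ρ₁ ρ₂ / d c' ρ₁ ρ₂ ≤ C := by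
  have hC0 : (0:ℝ) < C := by linarith
  have htc : 0 < Real.cosh c - 1 := by have := Real.one_lt_cosh.2 hc.ne'; linarith
  have htc' : 0 < Real.cosh c' - 1 := by have := Real.one_lt_cosh.2 hc'.ne'; linarith
  -- ratio bounds on (cosh c - 1) vs (cosh c' - 1)
  have ht1 : Real.cosh c - 1 ≤ C * (Real.cosh c' - 1) := by
    rw [div_le_iff₀ htc'] at h2; linarith
  have ht2 : Real.cosh c' - 1 ≤ C * (Real.cosh c - 1) := by
    have := (div_le_div_iff₀ hC0 htc').1 h1; linarith
  set a := d c ρ₁ ρ₂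
  set b := d c' ρ₁ ρ₂
  have hfa : 1 < f c ρ₁ ρ₂ := one_lt_f hc ρ₁ ρ₂
  have hfb : 1 < f c' ρ₁ ρ₂ := one_lt_f hc' ρ₁ ρ₂
  have ha : 0 < a := arcosh_pos hfa
  have hb : 0 < b := arcosh_pos hfb
  have hca : Real.cosh a = f c ρ₁ ρ₂ := cosh_arcosh hfa.le
  have hcb : Real.cosh b = f c' ρ₁ ρ₂ := cosh_arcosh hfb.le
  have keyA : Real.cosh a - 1 =
      Real.cosh ρ₁ * Real.cosh ρ₂ * (Real.cosh c - 1) + (Real.cosh (ρ₁ - ρ₂) - 1) := by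
    rw [hca, f, Real.cosh_sub]; ring
  have keyB : Real.cosh b - 1 =
      Real.cosh ρ₁ * Real.cosh ρ₂ * (Real.cosh c' - 1) + (Real.cosh (ρ₁ - ρ₂) - 1) := by
    rw [hcb, f, Real.cosh_sub]; ring
  have hA : 1 ≤ Real.cosh ρ₁ * Real.cosh ρ₂ :=
    one_le_mul_of_one_le_of_one_le (Real.one_le_cosh ρ₁) (Real.one_le_cosh ρ₂)
  have hB : 0 ≤ Real.cosh (ρ₁ - ρ₂) - 1 := by have := Real.one_le_cosh (ρ₁ - ρ₂); linarith
  have hab : a ≤ C * b := by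
    apply le_of_cosh_le ha.le hb.le hC.le
    rw [keyA, keyB]; nlinarith
  have hba : b ≤ C * a := by
    apply le_of_cosh_le hb.le ha.le hC.le
    rw [keyA, keyB]; nlinarith
  constructor
  · rw [div_le_div_iff₀ hC0 hb]; linarith
  · rw [div_le_iff₀ hb]; linarith
end

section
/- Let λ₁, λ₂ > 0 and ℓ ≥ 0. Define cosh h_Λ = (cosh(λ₁/2)·cosh(λ₂/2) + cosh(ℓ/2)) / (sinh(λ₁/2)·sinh(λ₂/2)) and cosh h₀ the same with ℓ = 0. Then 1 ≤ (cosh h_Λ − 1)/(cosh h₀ − 1) ≤ (1 + cosh(ℓ/2))/2. -/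
theorem stmt_13 (lam₁ lam₂ ℓ hΛ h₀ : ℝ) (hlam₁ : 0 < lam₁) (hlam₂ : 0 < lam₂) (hℓ : 0 ≤ ℓ)
    (hhΛ : Real.cosh hΛ =
      (Real.cosh (lam₁ / 2) * Real.cosh (lam₂ / 2) + Real.cosh (ℓ / 2)) /
        (Real.sinh (lam₁ / 2) * Real.sinh (lam₂ / 2)))
    (hh₀ : Real.cosh h₀ =
      (Real.cosh (lam₁ / 2) * Real.cosh (lam₂ / 2) + 1) /
        (Real.sinh (lam₁ / 2) * Real.sinh (lam₂ / 2))) :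
    1 ≤ (Real.cosh hΛ - 1) / (Real.cosh h₀ - 1) ∧
      (Real.cosh hΛ - 1) / (Real.cosh h₀ - 1) ≤ (1 + Real.cosh (ℓ / 2)) / 2 := by
  have hs : 0 < Real.sinh (lam₁ / 2) * Real.sinh (lam₂ / 2) :=
    mul_pos (Real.sinh_pos_iff.2 (by linarith)) (Real.sinh_pos_iff.2 (by linarith))
  set c := Real.cosh ((lam₁ - lam₂) / 2) with hcdef
  set L := Real.cosh (ℓ / 2) with hLdef
  have hc : 1 ≤ c := Real.one_le_cosh _
  have hL : 1 ≤ L := Real.one_le_cosh _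
  have key : c = Real.cosh (lam₁ / 2) * Real.cosh (lam₂ / 2) -
      Real.sinh (lam₁ / 2) * Real.sinh (lam₂ / 2) := by
    rw [hcdef, show (lam₁ - lam₂) / 2 = lam₁ / 2 - lam₂ / 2 by ring, Real.cosh_sub]
  have e1 : Real.cosh hΛ - 1 = (c + L) / (Real.sinh (lam₁ / 2) * Real.sinh (lam₂ / 2)) := by
    rw [hhΛ, key]; field_simp; ring
  have e0 : Real.cosh h₀ - 1 = (c + 1) / (Real.sinh (lam₁ / 2) * Real.sinh (lam₂ / 2)) := by
    rw [hh₀, key]; field_simp; ring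
  have e : (Real.cosh hΛ - 1) / (Real.cosh h₀ - 1) = (c + L) / (c + 1) := by
    rw [e1, e0, div_div_div_cancel_right₀ hs.ne']
  rw [e]
  constructor
  · rw [one_le_div (by linarith)]; linarith
  · rw [div_le_div_iff₀ (by linarith) (by norm_num)]; nlinarith [(mul_nonneg (by linarith : (0:ℝ) ≤ L - 1) (by linarith : (0:ℝ) ≤ c - 1))]
end

section
/- Let λ₁ > 0 and k, K be constants with 0 < k ≤ K. Suppose l_Λ > 0 satisfies sinh(λ₁/2) = l_Λ·k'·sqrt(1 + l_Λ²·k'') + l_Λ·k''·sqrt(1 + l_Λ²·k'²) for some k', k'' ∈ [k, K] (i.e. k ≤ k', k'' ≤ K). Then sinh(λ₁/4)/K ≤ l_Λ ≤ sinh(λ₁/4)/k. -/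
lemma aux_mono (a b : ℝ) (ha : 0 ≤ a) (hb : 0 ≤ b)
    (h : a * Real.sqrt (1 + a ^ 2) ≤ b * Real.sqrt (1 + b ^ 2)) : a ≤ b := by
  by_contra hab
  push_neg at hab
  have hsq : Real.sqrt (1 + b ^ 2) ≤ Real.sqrt (1 + a ^ 2) := by
    apply Real.sqrt_le_sqrt; nlinarith
  have h1 : b * Real.sqrt (1 + b ^ 2) ≤ b * Real.sqrt (1 + a ^ 2) :=
    mul_le_mul_of_nonneg_left hsq hb
  have h2 : b * Real.sqrt (1 + a ^ 2) < a * Real.sqrt (1 + a ^ 2) := by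
    apply mul_lt_mul_of_pos_right hab
    positivity
  linarith

set_option maxHeartbeats 1000000 in
theorem stmt_15 (lam₁ k K k' k'' lΛ : ℝ) (hlam₁ : 0 < lam₁) (hk : 0 < k) (hkK : k ≤ K)
    (hk' : k' ∈ Set.Icc k K) (hk'' : k'' ∈ Set.Icc k K) (hl : 0 < lΛ)
    (hEq : Real.sinh (lam₁ / 2) =
      lΛ * k' * Real.sqrt (1 + lΛ ^ 2 * k'' ^ 2) +
        lΛ * k'' * Real.sqrt (1 + lΛ ^ 2 * k' ^ 2)) :
    Real.sinh (lam₁ / 4) / K ≤ lΛ ∧ lΛ ≤ Real.sinh (lam₁ / 4) / k := by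
  obtain ⟨hk'1, hk'2⟩ := hk'
  obtain ⟨hk''1, hk''2⟩ := hk''
  have hK : 0 < K := lt_of_lt_of_le hk hkK
  have hk'0 : 0 < k' := lt_of_lt_of_le hk hk'1
  have hk''0 : 0 < k'' := lt_of_lt_of_le hk hk''1
  set s := Real.sinh (lam₁ / 4) with hs_def
  have hs : 0 < s := Real.sinh_pos_iff.2 (by linarith)
  have h2 : Real.sinh (lam₁ / 2) = 2 * s * Real.sqrt (1 + s ^ 2) := by
    have h4 : lam₁ / 2 = 2 * (lam₁ / 4) := by ring
    rw [h4, Real.sinh_two_mul]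
    have hc : (1 : ℝ) + s ^ 2 = Real.cosh (lam₁ / 4) ^ 2 := by
      rw [Real.cosh_sq]; ring
    rw [hc, Real.sqrt_sq (Real.cosh_pos (lam₁ / 4)).le, hs_def]
  have e1 : k ^ 2 * lΛ ^ 2 ≤ k' ^ 2 * lΛ ^ 2 :=
    mul_le_mul_of_nonneg_right (by nlinarith) (sq_nonneg lΛ)
  have e2 : k ^ 2 * lΛ ^ 2 ≤ k'' ^ 2 * lΛ ^ 2 :=
    mul_le_mul_of_nonneg_right (by nlinarith) (sq_nonneg lΛ)
  have e3 : k' ^ 2 * lΛ ^ 2 ≤ K ^ 2 * lΛ ^ 2 :=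
    mul_le_mul_of_nonneg_right (by nlinarith) (sq_nonneg lΛ)
  have e4 : k'' ^ 2 * lΛ ^ 2 ≤ K ^ 2 * lΛ ^ 2 :=
    mul_le_mul_of_nonneg_right (by nlinarith) (sq_nonneg lΛ)
  have hlow : 2 * (k * lΛ) * Real.sqrt (1 + (k * lΛ) ^ 2) ≤ Real.sinh (lam₁ / 2) := by
    rw [hEq]
    have hs1 : Real.sqrt (1 + (k * lΛ) ^ 2) ≤ Real.sqrt (1 + lΛ ^ 2 * k'' ^ 2) := by
      apply Real.sqrt_le_sqrt; nlinarith [e2]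
    have hs2 : Real.sqrt (1 + (k * lΛ) ^ 2) ≤ Real.sqrt (1 + lΛ ^ 2 * k' ^ 2) := by
      apply Real.sqrt_le_sqrt; nlinarith [e1]
    have h1 : lΛ * k * Real.sqrt (1 + (k * lΛ) ^ 2) ≤ lΛ * k' * Real.sqrt (1 + lΛ ^ 2 * k'' ^ 2) :=
      mul_le_mul (mul_le_mul_of_nonneg_left hk'1 hl.le) hs1 (Real.sqrt_nonneg _)
        (mul_nonneg hl.le hk'0.le)
    have h2' : lΛ * k * Real.sqrt (1 + (k * lΛ) ^ 2) ≤ lΛ * k'' * Real.sqrt (1 + lΛ ^ 2 * k' ^ 2) :=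
      mul_le_mul (mul_le_mul_of_nonneg_left hk''1 hl.le) hs2 (Real.sqrt_nonneg _)
        (mul_nonneg hl.le hk''0.le)
    linarith
  have hhigh : Real.sinh (lam₁ / 2) ≤ 2 * (K * lΛ) * Real.sqrt (1 + (K * lΛ) ^ 2) := by
    rw [hEq]
    have hs1 : Real.sqrt (1 + lΛ ^ 2 * k'' ^ 2) ≤ Real.sqrt (1 + (K * lΛ) ^ 2) := by
      apply Real.sqrt_le_sqrt; nlinarith [e4]
    have hs2 : Real.sqrt (1 + lΛ ^ 2 * k' ^ 2) ≤ Real.sqrt (1 + (K * lΛ) ^ 2) := by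
      apply Real.sqrt_le_sqrt; nlinarith [e3]
    have h1 : lΛ * k' * Real.sqrt (1 + lΛ ^ 2 * k'' ^ 2) ≤ lΛ * K * Real.sqrt (1 + (K * lΛ) ^ 2) :=
      mul_le_mul (mul_le_mul_of_nonneg_left hk'2 hl.le) hs1 (Real.sqrt_nonneg _)
        (mul_nonneg hl.le hK.le)
    have h2' : lΛ * k'' * Real.sqrt (1 + lΛ ^ 2 * k' ^ 2) ≤ lΛ * K * Real.sqrt (1 + (K * lΛ) ^ 2) :=
      mul_le_mul (mul_le_mul_of_nonneg_left hk''2 hl.le) hs2 (Real.sqrt_nonneg _)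
        (mul_nonneg hl.le hK.le)
    linarith
  have hkl : k * lΛ ≤ s := by
    apply aux_mono _ _ (by positivity) hs.le
    linarith [hlow, h2]
  have hKl : s ≤ K * lΛ := by
    apply aux_mono _ _ hs.le (by positivity)
    linarith [hhigh, h2]
  constructor
  · rw [div_le_iff₀ hK]; linarith [mul_comm K lΛ]
  · rw [le_div_iff₀ hk]; linarith [mul_comm k lΛ]
end

section
/- Let t ∈ ℝ, ℓ > 0, and define for n ∈ ℤ: u_n = cosh((t + n)·ℓ). Then (u₂ − u₁)/(u₁ − u₀) = (cosh(tℓ + 2ℓ) − cosh(tℓ + ℓ))/(cosh(tℓ + ℓ) − cosh(tℓ)) = sinh(tℓ + 3ℓ/2)/sinh(tℓ + ℓ/2), and moreover the map t ↦ sinh(tℓ + 3ℓ/2)/sinh(tℓ + ℓ/2) is injective on the set where sinh(tℓ + ℓ/2) ≠ 0. -/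
theorem stmt_18 (ℓ : ℝ) (hℓ : 0 < ℓ) :
    (∀ t : ℝ,
      (Real.cosh ((t + 2) * ℓ) - Real.cosh ((t + 1) * ℓ)) /
          (Real.cosh ((t + 1) * ℓ) - Real.cosh ((t + 0) * ℓ)) =
        (Real.cosh (t * ℓ + 2 * ℓ) - Real.cosh (t * ℓ + ℓ)) /
          (Real.cosh (t * ℓ + ℓ) - Real.cosh (t * ℓ)) ∧
      (Real.cosh (t * ℓ + 2 * ℓ) - Real.cosh (t * ℓ + ℓ)) /
          (Real.cosh (t * ℓ + ℓ) - Real.cosh (t * ℓ)) =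
        Real.sinh (t * ℓ + 3 * ℓ / 2) / Real.sinh (t * ℓ + ℓ / 2)) ∧
    ∀ s t : ℝ, Real.sinh (s * ℓ + ℓ / 2) ≠ 0 → Real.sinh (t * ℓ + ℓ / 2) ≠ 0 →
      Real.sinh (s * ℓ + 3 * ℓ / 2) / Real.sinh (s * ℓ + ℓ / 2) =
        Real.sinh (t * ℓ + 3 * ℓ / 2) / Real.sinh (t * ℓ + ℓ / 2) →
      s = t := by
  have hsl2 : Real.sinh (ℓ / 2) ≠ 0 := by
    simpa [Real.sinh_eq_zero] using (by linarith : ℓ / 2 ≠ 0)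
  have key : ∀ X h : ℝ, Real.cosh (X + h) - Real.cosh (X - h) =
      2 * Real.sinh X * Real.sinh h := by
    intro X h
    rw [Real.cosh_add, Real.cosh_sub]; ring
  constructor
  · intro t
    constructor
    · ring_nf
    · have hn : Real.cosh (t * ℓ + 2 * ℓ) - Real.cosh (t * ℓ + ℓ) =
          2 * Real.sinh (t * ℓ + 3 * ℓ / 2) * Real.sinh (ℓ / 2) := by
        have := key (t * ℓ + 3 * ℓ / 2) (ℓ / 2)
        rw [show t * ℓ + 3 * ℓ / 2 + ℓ / 2 = t * ℓ + 2 * ℓ by ring,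
          show t * ℓ + 3 * ℓ / 2 - ℓ / 2 = t * ℓ + ℓ by ring] at this
        exact this
      have hd : Real.cosh (t * ℓ + ℓ) - Real.cosh (t * ℓ) =
          2 * Real.sinh (t * ℓ + ℓ / 2) * Real.sinh (ℓ / 2) := by
        have := key (t * ℓ + ℓ / 2) (ℓ / 2)
        rw [show t * ℓ + ℓ / 2 + ℓ / 2 = t * ℓ + ℓ by ring,
          show t * ℓ + ℓ / 2 - ℓ / 2 = t * ℓ by ring] at this
        exact this
      rw [hn, hd, mul_div_mul_right _ _ hsl2, mul_div_mul_left _ _ two_ne_zero]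
  · intro s t hs ht h
    rw [show s * ℓ + 3 * ℓ / 2 = (s * ℓ + ℓ / 2) + ℓ by ring,
      show t * ℓ + 3 * ℓ / 2 = (t * ℓ + ℓ / 2) + ℓ by ring,
      div_eq_div_iff hs ht] at h
    have has : s * ℓ + ℓ / 2 = s * ℓ + ℓ / 2 := rfl
    have hbt : t * ℓ + ℓ / 2 = t * ℓ + ℓ / 2 := rfl
    generalize ha : s * ℓ + ℓ / 2 = a at h hs has
    generalize hb : t * ℓ + ℓ / 2 = b at h ht hbt
    rw [Real.sinh_add, Real.sinh_add] at h
    have hsinhℓ : Real.sinh ℓ ≠ 0 := by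
      simpa [Real.sinh_eq_zero] using hℓ.ne'
    have key2 : Real.sinh (b - a) = 0 := by
      rw [Real.sinh_sub]
      have h0 : Real.sinh ℓ *
          (Real.sinh b * Real.cosh a - Real.cosh b * Real.sinh a) = 0 := by
        linear_combination h
      have := (mul_eq_zero.mp h0).resolve_left hsinhℓ
      linarith
    rw [Real.sinh_eq_zero] at key2
    have : t * ℓ = s * ℓ := by rw [← has, ← hbt] at key2; linarith
    exact (mul_right_cancel₀ hℓ.ne' this).symm
end
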